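/- Let R₁ and R₂ be reflexive binary relations on disjoint finite sets S₁ and S₂, and let R = R₁ ⊔ R₂ be the induced relation on the disjoint union S₁ ⊔ S₂ (no pair between S₁ and S₂ is related). Then ‖R₁ ⊔ R₂‖⁻¹ = ‖R₁‖⁻¹ + ‖R₂‖⁻¹. -/
import Mathlib


open Finset
open scoped Classical

/-- The quadratic form `f_R(x) = Σ_{i,j} R(i,j) x_i x_j` of a binary relation. -/
noncomputable def quadForm {ι : Type*} [Fintype ι] (R : ι → ι → Prop) (x : ι → ℝ) : ℝ :=
  ∑ i, ∑ j, (if R i j then (1 : ℝ) else 0) * x i * x j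
lemma quadForm_nonneg {ι : Type*} [Fintype ι] (R : ι → ι → Prop) (x : ι → ℝ)
    (hx : ∀ i, 0 ≤ x i) : 0 ≤ quadForm R x := by
  apply Finset.sum_nonneg; intro i _
  apply Finset.sum_nonneg; intro j _
  have : (0:ℝ) ≤ if R i j then (1:ℝ) else 0 := by split <;> norm_num
  exact mul_nonneg (mul_nonneg this (hx i)) (hx j)

lemma quadForm_smul {ι : Type*} [Fintype ι] (R : ι → ι → Prop) (c : ℝ) (x : ι → ℝ) :
    quadForm R (fun i => c * x i) = c ^ 2 * quadForm R x := by
  unfold quadForm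
  rw [Finset.mul_sum]
  refine Finset.sum_congr rfl fun i _ => ?_
  rw [Finset.mul_sum]
  refine Finset.sum_congr rfl fun j _ => ?_
  ring

lemma quadForm_scale_ge {n : ℕ} (R : Fin n → Fin n → Prop) (m : ℝ)
    (hm : IsLeast (quadForm R '' stdSimplex ℝ (Fin n)) m)
    (z : Fin n → ℝ) (hz : ∀ i, 0 ≤ z i) :
    (∑ i, z i) ^ 2 * m ≤ quadForm R z := by
  set s := ∑ i, z i with hs
  have hs0 : 0 ≤ s := Finset.sum_nonneg fun i _ => hz i
  rcases eq_or_lt_of_le hs0 with h | h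
  · have hz0 : ∀ i ∈ Finset.univ, z i = 0 := by
      rw [← Finset.sum_eq_zero_iff_of_nonneg (fun i _ => hz i)]
      exact h.symm
    have : quadForm R z = 0 := by
      apply Finset.sum_eq_zero; intro i _
      apply Finset.sum_eq_zero; intro j _
      rw [hz0 j (Finset.mem_univ j), mul_zero]
    rw [this, ← h]
    norm_num
  · have hw : (fun i => z i / s) ∈ stdSimplex ℝ (Fin n) := by
      constructor
      · intro i; exact div_nonneg (hz i) hs0
      · rw [← Finset.sum_div, ← hs, div_self h.ne']
    have hle : m ≤ quadForm R (fun i => z i / s) := hm.2 ⟨_, hw, rfl⟩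
    have hzz : z = fun i => s * (z i / s) := by
      funext i; field_simp
    calc s ^ 2 * m ≤ s ^ 2 * quadForm R (fun i => z i / s) := by
            apply mul_le_mul_of_nonneg_left hle (by positivity)
      _ = quadForm R z := by rw [← quadForm_smul]; exact congrArg (quadForm R) hzz.symm

lemma quadForm_least_pos {n : ℕ} (R : Fin n → Fin n → Prop) (hrefl : ∀ i, R i i) (m : ℝ)
    (hm : IsLeast (quadForm R '' stdSimplex ℝ (Fin n)) m) : 0 < m := by
  obtain ⟨x, ⟨hx0, hx1⟩, hxm⟩ := hm.1
  obtain ⟨i, hi⟩ : ∃ i, 0 < x i := by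
    by_contra h
    push_neg at h
    have : ∀ i ∈ Finset.univ, x i = 0 := fun i _ => le_antisymm (h i) (hx0 i)
    rw [Finset.sum_eq_zero this] at hx1
    norm_num at hx1
  have key : x i * x i ≤ quadForm R x := by
    have inner : ∀ k : Fin n, (0:ℝ) ≤ ∑ j, (if R k j then (1:ℝ) else 0) * x k * x j := by
      intro k
      apply Finset.sum_nonneg; intro j _
      have : (0:ℝ) ≤ if R k j then (1:ℝ) else 0 := by split <;> norm_num
      exact mul_nonneg (mul_nonneg this (hx0 k)) (hx0 j)
    have t1 : (if R i i then (1:ℝ) else 0) * x i * x i ≤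
        ∑ j, (if R i j then (1:ℝ) else 0) * x i * x j := by
      apply Finset.single_le_sum (f := fun j => (if R i j then (1:ℝ) else 0) * x i * x j)
        (fun j _ => ?_) (Finset.mem_univ i)
      have : (0:ℝ) ≤ if R i j then (1:ℝ) else 0 := by split <;> norm_num
      exact mul_nonneg (mul_nonneg this (hx0 i)) (hx0 j)
    have t2 : (∑ j, (if R i j then (1:ℝ) else 0) * x i * x j) ≤ quadForm R x := by
      apply Finset.single_le_sum (f := fun k => ∑ j, (if R k j then (1:ℝ) else 0) * x k * x j)
        (fun k _ => inner k) (Finset.mem_univ i)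
    rw [if_pos (hrefl i), one_mul] at t1
    exact t1.trans t2
  rw [← hxm]
  exact lt_of_lt_of_le (mul_pos hi hi) key

lemma quadForm_split {n₁ n₂ : ℕ}
    (R₁ : Fin n₁ → Fin n₁ → Prop) (R₂ : Fin n₂ → Fin n₂ → Prop)
    (R : (Fin n₁ ⊕ Fin n₂) → (Fin n₁ ⊕ Fin n₂) → Prop)
    (hR : ∀ a b, R a b ↔ (∃ i j, a = Sum.inl i ∧ b = Sum.inl j ∧ R₁ i j) ∨
                         (∃ i j, a = Sum.inr i ∧ b = Sum.inr j ∧ R₂ i j))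
    (y : (Fin n₁ ⊕ Fin n₂) → ℝ) :
    quadForm R y = quadForm R₁ (fun i => y (Sum.inl i)) + quadForm R₂ (fun j => y (Sum.inr j)) := by
  have h11 : ∀ (i : Fin n₁) (j : Fin n₁), R (Sum.inl i) (Sum.inl j) ↔ R₁ i j := by
    intro i j; rw [hR]; simp
  have h22 : ∀ (i : Fin n₂) (j : Fin n₂), R (Sum.inr i) (Sum.inr j) ↔ R₂ i j := by
    intro i j; rw [hR]; simp
  have h12 : ∀ (i : Fin n₁) (j : Fin n₂), ¬ R (Sum.inl i) (Sum.inr j) := by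
    intro i j h; rw [hR] at h; simp at h
  have h21 : ∀ (i : Fin n₂) (j : Fin n₁), ¬ R (Sum.inr i) (Sum.inl j) := by
    intro i j h; rw [hR] at h; simp at h
  unfold quadForm
  rw [Fintype.sum_sum_type]
  simp only [Fintype.sum_sum_type]
  have e1 : ∀ i : Fin n₁, ∑ j : Fin n₂, (if R (Sum.inl i) (Sum.inr j) then (1:ℝ) else 0)
      * y (Sum.inl i) * y (Sum.inr j) = 0 := by
    intro i; apply Finset.sum_eq_zero; intro j _; rw [if_neg (h12 i j)]; ring
  have e2 : ∀ i : Fin n₂, ∑ j : Fin n₁, (if R (Sum.inr i) (Sum.inl j) then (1:ℝ) else 0)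
      * y (Sum.inr i) * y (Sum.inl j) = 0 := by
    intro i; apply Finset.sum_eq_zero; intro j _; rw [if_neg (h21 i j)]; ring
  simp only [h11, h22, e1, e2, add_zero, zero_add]

/-- Lemma 3: the inverse norm is additive on disjoint unions:
`‖R₁ ⊔ R₂‖⁻¹ = ‖R₁‖⁻¹ + ‖R₂‖⁻¹`. -/
theorem stmt5 (n₁ n₂ : ℕ) (h₁ : 0 < n₁) (h₂ : 0 < n₂)
    (R₁ : Fin n₁ → Fin n₁ → Prop) (R₂ : Fin n₂ → Fin n₂ → Prop)
    (hrefl₁ : ∀ i, R₁ i i) (hrefl₂ : ∀ i, R₂ i i)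
    (R : (Fin n₁ ⊕ Fin n₂) → (Fin n₁ ⊕ Fin n₂) → Prop)
    (hR : ∀ a b, R a b ↔ (∃ i j, a = Sum.inl i ∧ b = Sum.inl j ∧ R₁ i j) ∨
                         (∃ i j, a = Sum.inr i ∧ b = Sum.inr j ∧ R₂ i j))
    (m₁ m₂ m : ℝ)
    (hm₁ : IsLeast (quadForm R₁ '' stdSimplex ℝ (Fin n₁)) m₁)
    (hm₂ : IsLeast (quadForm R₂ '' stdSimplex ℝ (Fin n₂)) m₂)
    (hm : IsLeast (quadForm R '' stdSimplex ℝ (Fin n₁ ⊕ Fin n₂)) m) :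
    m⁻¹ = m₁⁻¹ + m₂⁻¹ := by
  have hp₁ : 0 < m₁ := quadForm_least_pos R₁ hrefl₁ m₁ hm₁
  have hp₂ : 0 < m₂ := quadForm_least_pos R₂ hrefl₂ m₂ hm₂
  have hps : 0 < m₁ + m₂ := by linarith
  -- upper bound: m ≤ m₁ m₂ / (m₁ + m₂)
  obtain ⟨x₁, hx₁, hq₁⟩ := hm₁.1
  obtain ⟨x₂, hx₂, hq₂⟩ := hm₂.1
  set t : ℝ := m₂ / (m₁ + m₂) with ht
  have ht0 : 0 ≤ t := by positivity
  have ht1 : t ≤ 1 := by rw [ht, div_le_one hps]; linarith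
  set y : (Fin n₁ ⊕ Fin n₂) → ℝ :=
    Sum.elim (fun i => t * x₁ i) (fun j => (1 - t) * x₂ j) with hy
  have hymem : y ∈ stdSimplex ℝ (Fin n₁ ⊕ Fin n₂) := by
    constructor
    · intro a
      cases a with
      | inl i => exact mul_nonneg ht0 (hx₁.1 i)
      | inr j => exact mul_nonneg (by linarith) (hx₂.1 j)
    · rw [Fintype.sum_sum_type]
      simp only [hy, Sum.elim_inl, Sum.elim_inr]
      rw [← Finset.mul_sum, ← Finset.mul_sum, hx₁.2, hx₂.2]
      ring
  have hupper : m ≤ m₁ * m₂ / (m₁ + m₂) := by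
    have := hm.2 ⟨y, hymem, rfl⟩
    have hval : quadForm R y = t ^ 2 * m₁ + (1 - t) ^ 2 * m₂ := by
      rw [quadForm_split R₁ R₂ R hR y]
      simp only [hy, Sum.elim_inl, Sum.elim_inr]
      rw [quadForm_smul, quadForm_smul, hq₁, hq₂]
    rw [hval] at this
    have : t ^ 2 * m₁ + (1 - t) ^ 2 * m₂ = m₁ * m₂ / (m₁ + m₂) := by
      rw [ht]; field_simp; ring
    linarith [hm.2 (Set.mem_image_of_mem _ hymem), this]
  -- lower bound
  have hlower : m₁ * m₂ / (m₁ + m₂) ≤ m := by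
    obtain ⟨z, hz, hqz⟩ := hm.1
    set s : ℝ := ∑ i : Fin n₁, z (Sum.inl i) with hs
    have hsum : s + ∑ j : Fin n₂, z (Sum.inr j) = 1 := by
      rw [hs, ← Fintype.sum_sum_type]
      exact hz.2
    have hg1 : s ^ 2 * m₁ ≤ quadForm R₁ (fun i => z (Sum.inl i)) :=
      quadForm_scale_ge R₁ m₁ hm₁ _ (fun i => hz.1 _)
    have hg2 : (1 - s) ^ 2 * m₂ ≤ quadForm R₂ (fun j => z (Sum.inr j)) := by
      have h' : (∑ j : Fin n₂, z (Sum.inr j)) = 1 - s := by linarith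
      have := quadForm_scale_ge R₂ m₂ hm₂ (fun j => z (Sum.inr j)) (fun j => hz.1 _)
      rwa [h'] at this
    have hsplit := quadForm_split R₁ R₂ R hR z
    have hineq : m₁ * m₂ / (m₁ + m₂) ≤ s ^ 2 * m₁ + (1 - s) ^ 2 * m₂ := by
      rw [div_le_iff₀ hps]
      nlinarith [sq_nonneg (m₁ * s - m₂ * (1 - s))]
    rw [← hqz, hsplit]
    linarith
  have hmeq : m = m₁ * m₂ / (m₁ + m₂) := le_antisymm hupper hlower
  rw [hmeq]
  field_simp
  ring
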